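/- For every integer n ≥ 1 and every integer ℓ with 1 ≤ ℓ ≤ n+1, the middle 2ℓ levels graph of Q_{2n+1} has a cycle factor. -/

import Mathlib

/-- The Hamming weight of a bitstring of length `n`, i.e., its number of 1-bits. -/
def wt {n : ℕ} (x : Fin n → Bool) : ℕ := (Finset.univ.filter fun i => x i = true).card

/-- The `n`-dimensional hypercube: vertices are bitstrings of length `n`, two of which are
adjacent iff they differ in exactly one position. -/
def cube (n : ℕ) : SimpleGraph (Fin n → Bool) where
  Adj x y := hammingDist x y = 1
  symm := by constructor; intro x y h; show hammingDist y x = 1; rw [hammingDist_comm]; exact h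
  loopless := by constructor; intro x h; simp [hammingDist_self] at h
/-- The vertex set of the middle `2ℓ` levels of the `(2n+1)`-cube: bitstrings with
Hamming weight in the interval `[n+1−ℓ, n+ℓ]`. -/
def middleSet (n l : ℕ) : Set (Fin (2 * n + 1) → Bool) :=
  {x | n + 1 - l ≤ wt x ∧ wt x ≤ n + l}

/-- The middle `2ℓ` levels graph: the subgraph of the `(2n+1)`-cube induced by the vertices
with Hamming weight in `[n+1−ℓ, n+ℓ]`. -/
def middleGraph (n l : ℕ) : SimpleGraph (middleSet n l) :=
  (cube (2 * n + 1)).induce (middleSet n l)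

/-- `H` is a cycle factor of `G`: a spanning subgraph in which every vertex has degree 2. -/
def IsCycleFactor {V : Type*} (G H : SimpleGraph V) : Prop :=
  H ≤ G ∧ ∀ v, (H.neighborSet v).ncard = 2

/-- `H` is a perfect matching of `G`: a spanning subgraph in which every vertex has degree 1. -/
def IsPerfectMatchingOf {V : Type*} (G H : SimpleGraph V) : Prop :=
  H ≤ G ∧ ∀ v, (H.neighborSet v).ncard = 1

noncomputable section MLCF
open Classical

namespace MLCF

/-- step value of a bit -/
def stp (b : Bool) : ℤ := if b then 1 else -1

/-- prefix sums -/
def hh (x : ℕ → Bool) (k : ℕ) : ℤ := ∑ j ∈ Finset.range k, stp (x j)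

lemma hh_zero (x : ℕ → Bool) : hh x 0 = 0 := by simp [hh]

lemma hh_succ (x : ℕ → Bool) (k : ℕ) : hh x (k+1) = hh x k + stp (x k) :=
  Finset.sum_range_succ _ _

lemma stp_cases (b : Bool) : stp b = 1 ∨ stp b = -1 := by cases b <;> simp [stp]

lemma hh_step (x : ℕ → Bool) (k : ℕ) :
    hh x (k+1) = hh x k + 1 ∨ hh x (k+1) = hh x k - 1 := by
  rcases stp_cases (x k) with h | h <;> rw [hh_succ, h] <;> [left; right] <;> ring

/-- minimality predicate: `k` is a position of minimum of `hh x` on `[0,N]` -/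
def minP (x : ℕ → Bool) (N k : ℕ) : Prop := k ≤ N ∧ ∀ j ≤ N, hh x k ≤ hh x j

lemma exminP (x : ℕ → Bool) (N : ℕ) : ∃ k, minP x N k := by
  obtain ⟨k, hk, hmin⟩ := Finset.exists_min_image (Finset.range (N+1)) (hh x)
    ⟨0, by simp⟩
  exact ⟨k, by simpa using Finset.mem_range_succ_iff.mp hk,
    fun j hj => hmin j (Finset.mem_range_succ_iff.mpr hj)⟩

/-- first position of minimum -/
def fm (x : ℕ → Bool) (N : ℕ) : ℕ := Nat.find (exminP x N)

/-- last position of minimum -/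
def lm (x : ℕ → Bool) (N : ℕ) : ℕ := Nat.findGreatest (minP x N) N

/-- the minimum value -/
def Mv (x : ℕ → Bool) (N : ℕ) : ℤ := hh x (fm x N)

lemma fm_le (x : ℕ → Bool) (N : ℕ) : fm x N ≤ N := (Nat.find_spec (exminP x N)).1

lemma Mv_min (x : ℕ → Bool) (N : ℕ) : ∀ j ≤ N, Mv x N ≤ hh x j :=
  (Nat.find_spec (exminP x N)).2

lemma fm_lt (x : ℕ → Bool) (N : ℕ) : ∀ k < fm x N, Mv x N < hh x k := by
  intro k hk
  have hkN : k ≤ N := le_trans (le_of_lt hk) (fm_le x N)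
  have := Nat.find_min (exminP x N) hk
  simp only [minP, not_and, not_forall] at this
  obtain ⟨j, hj, hlt⟩ := this hkN
  exact lt_of_le_of_lt (Mv_min x N j hj) (by push_neg at hlt; omega)

lemma lm_le (x : ℕ → Bool) (N : ℕ) : lm x N ≤ N := Nat.findGreatest_le N

lemma lm_spec (x : ℕ → Bool) (N : ℕ) : minP x N (lm x N) := by
  obtain ⟨k, hk⟩ := exminP x N
  exact Nat.findGreatest_spec hk.1 hk

lemma hh_lm (x : ℕ → Bool) (N : ℕ) : hh x (lm x N) = Mv x N :=
  le_antisymm ((lm_spec x N).2 _ (fm_le x N)) (Mv_min x N _ (lm_le x N))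

lemma lm_gt (x : ℕ → Bool) (N : ℕ) : ∀ k, lm x N < k → k ≤ N → Mv x N < hh x k := by
  intro k hk hkN
  have := Nat.findGreatest_is_greatest hk hkN
  simp only [minP, not_and, not_forall] at this
  obtain ⟨j, hj, hlt⟩ := this hkN
  exact lt_of_le_of_lt (Mv_min x N j hj) (by push_neg at hlt; omega)

lemma Mv_nonpos (x : ℕ → Bool) (N : ℕ) : Mv x N ≤ 0 := by
  have := Mv_min x N 0 (Nat.zero_le N)
  rwa [hh_zero] at this

lemma hh_update (x : ℕ → Bool) (p : ℕ) (b : Bool) (k : ℕ) :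
    hh (Function.update x p b) k = if k ≤ p then hh x k else hh x k + (stp b - stp (x p)) := by
  induction k with
  | zero => simp [hh_zero]
  | succ k ih =>
    rw [hh_succ, hh_succ, ih]
    rcases lt_trichotomy k p with h | h | h
    · rw [if_pos (le_of_lt h), if_pos (by omega), Function.update_of_ne (by omega)]
    · subst h
      rw [if_pos (le_refl k), if_neg (by omega), Function.update_self]; ring
    · rw [if_neg (by omega), if_neg (by omega), Function.update_of_ne (by omega)]; ring

-- appended to part1 content when testing




variable (x : ℕ → Bool) (N : ℕ)

-- up is defined when Mv < 0
lemma fm_pos (ha : Mv x N < 0) : 0 < fm x N := by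
  rcases Nat.eq_zero_or_pos (fm x N) with h | h
  · exfalso; have : Mv x N = 0 := by rw [Mv, h, hh_zero]
    omega
  · exact h

lemma hh_fm (ha : Mv x N < 0) : hh x (fm x N - 1) = Mv x N + 1 := by
  have h1 : fm x N - 1 < fm x N := by have := fm_pos x N ha; omega
  have h2 := fm_lt x N _ h1
  have h3 : (fm x N - 1) + 1 = fm x N := by have := fm_pos x N ha; omega
  have h4 := hh_step x (fm x N - 1)
  rw [h3] at h4
  have hMv : hh x (fm x N) = Mv x N := rfl
  rcases h4 with h | h <;> omega

lemma x_fm (ha : Mv x N < 0) : x (fm x N - 1) = false := by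
  have h3 : (fm x N - 1) + 1 = fm x N := by have := fm_pos x N ha; omega
  have h4 := hh_succ x (fm x N - 1)
  rw [h3, hh_fm x N ha] at h4
  have hMv : hh x (fm x N) = Mv x N := rfl
  cases hxv : x (fm x N - 1) with
  | false => rfl
  | true => exfalso; rw [hxv] at h4; simp [stp] at h4; omega

lemma hh_up (ha : Mv x N < 0) (k : ℕ) :
    hh (Function.update x (fm x N - 1) true) k =
      if k ≤ fm x N - 1 then hh x k else hh x k + 2 := by
  rw [hh_update, x_fm x N ha]
  simp [stp]

lemma up_min_at (ha : Mv x N < 0) :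
    minP (Function.update x (fm x N - 1) true) N (fm x N - 1) := by
  constructor
  · have := fm_le x N; omega
  · intro j hj
    rw [hh_up x N ha, hh_up x N ha, if_pos (le_refl _), hh_fm x N ha]
    by_cases hjp : j ≤ fm x N - 1
    · rw [if_pos hjp]
      rcases eq_or_lt_of_le hjp with h | h
      · rw [h, hh_fm x N ha]
      · have := fm_lt x N j (by have := fm_pos x N ha; omega)
        omega
    · rw [if_neg hjp]
      have := Mv_min x N j hj; omega

lemma lm_up (ha : Mv x N < 0) :
    lm (Function.update x (fm x N - 1) true) N = fm x N - 1 := by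
  rw [lm, Nat.findGreatest_eq_iff]
  refine ⟨by have := fm_le x N; omega, fun _ => up_min_at x N ha, ?_⟩
  intro k hk hkN hP
  have h1 : hh (Function.update x (fm x N - 1) true) k = hh x k + 2 := by
    rw [hh_up x N ha, if_neg (by omega)]
  have h2 := hP.2 (fm x N - 1) (by have := fm_le x N; omega)
  simp only [hh_up x N ha] at h2
  rw [if_neg (by omega), if_pos (le_refl _), hh_fm x N ha] at h2
  have h3 := Mv_min x N k hkN
  omega

lemma Mv_up (ha : Mv x N < 0) :
    Mv (Function.update x (fm x N - 1) true) N = Mv x N + 1 := by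
  rw [← hh_lm, lm_up x N ha, hh_up x N ha, if_pos (le_refl _), hh_fm x N ha]

lemma hhN_up (ha : Mv x N < 0) :
    hh (Function.update x (fm x N - 1) true) N = hh x N + 2 := by
  rw [hh_up x N ha, if_neg ?_]
  have h1 := fm_le x N
  have h2 := fm_pos x N ha
  -- need fm x N - 1 < N : since Mv x N < 0 = hh x N? no. fm ≤ N and fm ≥ 1 gives fm - 1 ≤ N - 1 < N if N ≥ 1
  omega

lemma down_up (ha : Mv x N < 0) :
    Function.update (Function.update x (fm x N - 1) true)
      (lm (Function.update x (fm x N - 1) true) N) false = x := by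
  rw [lm_up x N ha, Function.update_idem, ← x_fm x N ha, Function.update_eq_self]


-- Down move lemmas, hypothesis: hb : Mv x N < hh x N
variable (x : ℕ → Bool) (N : ℕ)

lemma lm_lt (hb : Mv x N < hh x N) : lm x N < N := by
  rcases eq_or_lt_of_le (lm_le x N) with h | h
  · exfalso; have := hh_lm x N; rw [h] at this; omega
  · exact h

lemma hh_lm1 (hb : Mv x N < hh x N) : hh x (lm x N + 1) = Mv x N + 1 := by
  have h1 := lm_gt x N (lm x N + 1) (by omega) (by have := lm_lt x N hb; omega)
  have h4 := hh_step x (lm x N)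
  rw [hh_lm x N] at h4
  rcases h4 with h | h <;> omega

lemma x_lm (hb : Mv x N < hh x N) : x (lm x N) = true := by
  have h4 := hh_succ x (lm x N)
  rw [hh_lm x N, hh_lm1 x N hb] at h4
  cases hxv : x (lm x N) with
  | true => rfl
  | false => exfalso; rw [hxv] at h4; simp [stp] at h4

lemma hh_dn (hb : Mv x N < hh x N) (k : ℕ) :
    hh (Function.update x (lm x N) false) k =
      if k ≤ lm x N then hh x k else hh x k - 2 := by
  rw [hh_update, x_lm x N hb]
  have hstp : stp false - stp true = -2 := by simp [stp]
  rw [hstp]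
  split <;> ring

lemma dn_min_at (hb : Mv x N < hh x N) :
    minP (Function.update x (lm x N) false) N (lm x N + 1) := by
  constructor
  · have := lm_lt x N hb; omega
  · intro j hj
    rw [hh_dn x N hb, hh_dn x N hb, if_neg (by omega), hh_lm1 x N hb]
    by_cases hjp : j ≤ lm x N
    · rw [if_pos hjp]
      have := Mv_min x N j hj; omega
    · rw [if_neg hjp]
      have := lm_gt x N j (by omega) hj; omega

lemma fm_dn (hb : Mv x N < hh x N) :
    fm (Function.update x (lm x N) false) N = lm x N + 1 := by
  rw [fm, Nat.find_eq_iff]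
  refine ⟨dn_min_at x N hb, ?_⟩
  intro k hk hP
  have h1 : hh (Function.update x (lm x N) false) k = hh x k := by
    rw [hh_dn x N hb, if_pos (by omega)]
  have h2 := hP.2 (lm x N + 1) (by have := lm_lt x N hb; omega)
  simp only [hh_dn x N hb] at h2
  rw [if_pos (by omega), if_neg (by omega), hh_lm1 x N hb] at h2
  have h3 := Mv_min x N k (by have := lm_le x N; omega)
  omega

lemma Mv_dn (hb : Mv x N < hh x N) :
    Mv (Function.update x (lm x N) false) N = Mv x N - 1 := by
  rw [Mv, fm_dn x N hb, hh_dn x N hb, if_neg (by omega), hh_lm1 x N hb]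
  ring

lemma hhN_dn (hb : Mv x N < hh x N) :
    hh (Function.update x (lm x N) false) N = hh x N - 2 := by
  rw [hh_dn x N hb, if_neg (by have := lm_lt x N hb; omega)]

lemma up_dn (hb : Mv x N < hh x N) :
    Function.update (Function.update x (lm x N) false)
      (fm (Function.update x (lm x N) false) N - 1) true = x := by
  rw [fm_dn x N hb]
  simp only [Nat.add_sub_cancel]
  rw [Function.update_idem, ← x_lm x N hb, Function.update_eq_self]

-- Core disjointness lemmas
lemma coreA (x y : ℕ → Bool) (N : ℕ) (hN : 2 ≤ N)
    (hxy : ∀ k ≤ N, hh y k = -hh x k) (ha : Mv x N < 0) :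
    fm x N - 1 ≠ lm y N := by
  intro heq
  set p := fm x N - 1 with hp
  have hfm : p + 1 = fm x N := by have := fm_pos x N ha; omega
  have hpN : p + 1 ≤ N := by rw [hfm]; exact fm_le x N
  have h1 : hh x (p + 1) = Mv x N := by rw [hfm]; rfl
  have h2 : hh x p = Mv x N + 1 := hh_fm x N ha
  have h3 : ∀ k ≤ p, Mv x N + 1 ≤ hh x k := by
    intro k hk
    have := fm_lt x N k (by omega)
    omega
  have hylm : hh y (lm y N) = Mv y N := hh_lm y N
  rw [← heq] at hylm
  have hyx : hh y p = -hh x p := hxy p (by omega)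
  have hMvy : Mv y N = -(Mv x N + 1) := by rw [← hylm, hyx, h2]
  have h4 : ∀ j ≤ N, hh x j ≤ Mv x N + 1 := by
    intro j hj
    have := Mv_min y N j hj
    rw [hxy j hj, hMvy] at this
    omega
  have h5 : ∀ k, p < k → k ≤ N → hh x k = Mv x N := by
    intro k hk hkN
    have hgt := lm_gt y N k (by omega) hkN
    rw [hxy k hkN, hMvy] at hgt
    have := Mv_min x N k hkN
    omega
  rcases Nat.eq_zero_or_pos p with hp0 | hp0
  · have e1 : hh x 1 = Mv x N := h5 1 (by omega) (by omega)
    have e2 : hh x 2 = Mv x N := h5 2 (by omega) (by omega)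
    have hs := hh_step x 1
    norm_num at hs
    omega
  · have e1 : hh x 0 = Mv x N + 1 := le_antisymm (h4 0 (by omega)) (h3 0 (by omega))
    have e2 : hh x 1 = Mv x N + 1 := le_antisymm (h4 1 (by omega)) (h3 1 (by omega))
    have hs := hh_step x 0
    norm_num at hs
    omega

lemma coreB (x y : ℕ → Bool) (N : ℕ) (hN : 2 ≤ N)
    (hxy : ∀ k ≤ N, hh y k = -hh x k) (hbx : Mv x N < hh x N) (hay : Mv y N < 0) :
    lm x N ≠ fm y N - 1 := by
  intro heq
  set i := lm x N with hi
  have hiN : i < N := lm_lt x N hbx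
  have hfm : i + 1 = fm y N := by have := fm_pos y N hay; omega
  have h1 : hh x i = Mv x N := hh_lm x N
  have h2 : hh x (i + 1) = Mv x N + 1 := hh_lm1 x N hbx
  have h3 : ∀ k, i < k → k ≤ N → Mv x N < hh x k := fun k hk hkN => lm_gt x N k hk hkN
  have hyfm : hh y (fm y N) = Mv y N := rfl
  rw [← hfm] at hyfm
  have hMvy : Mv y N = -(Mv x N + 1) := by
    rw [← hyfm, hxy (i+1) (by omega), h2]
  have h4 : ∀ j ≤ N, hh x j ≤ Mv x N + 1 := by
    intro j hj
    have := Mv_min y N j hj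
    rw [hxy j hj, hMvy] at this
    omega
  have h5 : ∀ k ≤ i, hh x k = Mv x N := by
    intro k hk
    have hkN : k ≤ N := by omega
    have hgt := fm_lt y N k (by omega)
    rw [hxy k hkN, hMvy] at hgt
    have := Mv_min x N k hkN
    omega
  rcases Nat.eq_zero_or_pos i with hi0 | hi0
  · have e1 : hh x 1 = Mv x N + 1 := by
      have := h3 1 (by omega) (by omega); have := h4 1 (by omega); omega
    have e2 : hh x 2 = Mv x N + 1 := by
      have := h3 2 (by omega) (by omega); have := h4 2 (by omega); omega
    have hs := hh_step x 1
    norm_num at hs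
    omega
  · have e1 : hh x 0 = Mv x N := h5 0 (by omega)
    have e2 : hh x 1 = Mv x N := h5 1 (by omega)
    have hs := hh_step x 0
    norm_num at hs
    omega

-- interface with Fin N → Bool world
def pad {N : ℕ} (v : Fin N → Bool) : ℕ → Bool :=
  fun j => if h : j < N then v ⟨j, h⟩ else false

lemma pad_lt {N : ℕ} (v : Fin N → Bool) {j : ℕ} (h : j < N) : pad v j = v ⟨j, h⟩ :=
  dif_pos h

lemma pad_ge {N : ℕ} (v : Fin N → Bool) {j : ℕ} (h : N ≤ j) : pad v j = false :=
  dif_neg (by omega)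

lemma pad_restrict {N : ℕ} (y : ℕ → Bool) (hy : ∀ j, N ≤ j → y j = false) :
    pad (fun i : Fin N => y i.val) = y := by
  funext j
  by_cases h : j < N
  · rw [pad_lt _ h]
  · rw [pad_ge _ (by omega), hy j (by omega)]

lemma hh_pad_wt {N : ℕ} (v : Fin N → Bool) : hh (pad v) N = 2 * (wt v : ℤ) - N := by
  have h1 : hh (pad v) N = ∑ i : Fin N, stp (v i) := by
    rw [hh, ← Fin.sum_univ_eq_sum_range (fun j => stp (pad v j)) N]
    exact Finset.sum_congr rfl (fun i _ => by rw [pad_lt v i.isLt])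
  rw [h1]
  have h2 : ∀ i : Fin N, stp (v i) = 2 * (if v i = true then (1:ℤ) else 0) - 1 := by
    intro i; cases hvi : v i <;> simp [stp, hvi]
  rw [Finset.sum_congr rfl (fun i _ => h2 i), Finset.sum_sub_distrib,
    Finset.sum_const, ← Finset.mul_sum, Finset.sum_boole]
  simp [wt]


/-- bitwise complement -/
def negv {N : ℕ} (v : Fin N → Bool) : Fin N → Bool := fun i => !(v i)

lemma negv_negv {N : ℕ} (v : Fin N → Bool) : negv (negv v) = v := by
  funext i; simp [negv]

lemma pad_negv {N : ℕ} (v : Fin N → Bool) {j : ℕ} (h : j < N) :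
    pad (negv v) j = !(pad v j) := by
  rw [pad_lt _ h, pad_lt _ h]; rfl

lemma hh_pad_neg {N : ℕ} (v : Fin N → Bool) :
    ∀ k ≤ N, hh (pad (negv v)) k = -hh (pad v) k := by
  intro k hk
  rw [hh, hh, ← Finset.sum_neg_distrib]
  refine Finset.sum_congr rfl (fun j hj => ?_)
  have hjN : j < N := by have := Finset.mem_range.mp hj; omega
  rw [pad_negv v hjN]
  cases pad v j <;> simp [stp]

lemma wt_negv {N : ℕ} (v : Fin N → Bool) : (wt (negv v) : ℤ) = N - wt v := by
  have h1 := hh_pad_wt (negv v)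
  have h2 := hh_pad_neg v N (le_refl N)
  have h3 := hh_pad_wt v
  omega

lemma hammingDist_update {N : ℕ} (v : Fin N → Bool) (i : Fin N) (b : Bool)
    (h : v i ≠ b) : hammingDist v (Function.update v i b) = 1 := by
  rw [hammingDist]
  have : (Finset.univ.filter fun j => v j ≠ Function.update v i b j) = {i} := by
    ext j
    simp only [Finset.mem_filter, Finset.mem_univ, true_and, Finset.mem_singleton]
    constructor
    · intro hj
      by_contra hji
      rw [Function.update_of_ne hji] at hj
      exact hj rfl
    · intro hj; subst hj; rw [Function.update_self]; exact h
  rw [this, Finset.card_singleton]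

lemma hammingDist_negv {N : ℕ} (a b : Fin N → Bool) :
    hammingDist (negv a) (negv b) = hammingDist a b := by
  rw [hammingDist, hammingDist]
  congr 1
  apply Finset.filter_congr
  intro i _
  simp [negv]

-- the chain-parity matching map
def mvl (n : ℕ) (v : Fin (2*n+1) → Bool) : ℤ :=
  (2*(n:ℤ)+1) - (wt v : ℤ) + Mv (pad v) (2*n+1)

def Lzv (n l : ℕ) (v : Fin (2*n+1) → Bool) : ℤ := max (mvl n v) ((n:ℤ) + 1 - l)

def goUp (n l : ℕ) (v : Fin (2*n+1) → Bool) : Prop :=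
  Even ((wt v : ℤ) - Lzv n l v)

def fF (n l : ℕ) (v : Fin (2*n+1) → Bool) : Fin (2*n+1) → Bool :=
  if goUp n l v then
    fun i => Function.update (pad v) (fm (pad v) (2*n+1) - 1) true i.val
  else
    fun i => Function.update (pad v) (lm (pad v) (2*n+1)) false i.val

lemma hh_pad_wt' (n : ℕ) (v : Fin (2*n+1) → Bool) :
    hh (pad v) (2*n+1) = 2 * (wt v : ℤ) - (2*(n:ℤ)+1) := by
  have := hh_pad_wt v
  push_cast at this ⊢
  linarith

lemma defin (n l : ℕ) (hl1 : 1 ≤ l) (hl2 : l ≤ n + 1) (v : Fin (2*n+1) → Bool)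
    (hv1 : n + 1 - l ≤ wt v) (hv2 : wt v ≤ n + l) :
    (goUp n l v → Mv (pad v) (2*n+1) < 0 ∧ (wt v : ℤ) + 1 ≤ (n:ℤ) + l) ∧
    (¬goUp n l v →
      Mv (pad v) (2*n+1) < hh (pad v) (2*n+1) ∧ (n:ℤ) + 1 - l ≤ (wt v : ℤ) - 1) := by
  have hhw := hh_pad_wt' n v
  have hM0 := Mv_nonpos (pad v) (2*n+1)
  have hMN := Mv_min (pad v) (2*n+1) (2*n+1) (le_refl _)
  rcases le_total ((n:ℤ)+1-l) (mvl n v) with hm | hm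
  · have hL : Lzv n l v = mvl n v := max_eq_left hm
    unfold mvl at hm hL
    constructor
    · intro hup
      rw [goUp, hL, Int.even_iff] at hup
      constructor <;> omega
    · intro hdn
      rw [goUp, hL, Int.not_even_iff] at hdn
      constructor <;> omega
  · have hL : Lzv n l v = (n:ℤ)+1-l := max_eq_right hm
    unfold mvl at hm
    constructor
    · intro hup
      rw [goUp, hL, Int.even_iff] at hup
      constructor <;> omega
    · intro hdn
      rw [goUp, hL, Int.not_even_iff] at hdn
      constructor <;> omega

lemma pad_fF_up (n l : ℕ) (v : Fin (2*n+1) → Bool) (hup : goUp n l v) :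
    pad (fF n l v) = Function.update (pad v) (fm (pad v) (2*n+1) - 1) true := by
  rw [fF, if_pos hup]
  apply pad_restrict
  intro j hj
  have hfm := fm_le (pad v) (2*n+1)
  rw [Function.update_of_ne (by omega), pad_ge v hj]

lemma pad_fF_dn (n l : ℕ) (v : Fin (2*n+1) → Bool) (hdn : ¬goUp n l v) :
    pad (fF n l v) = Function.update (pad v) (lm (pad v) (2*n+1)) false := by
  rw [fF, if_neg hdn]
  apply pad_restrict
  intro j hj
  by_cases h : j = lm (pad v) (2*n+1)
  · subst h; rw [Function.update_self]
  · rw [Function.update_of_ne h, pad_ge v hj]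

lemma wt_fF_up (n l : ℕ) (v : Fin (2*n+1) → Bool) (hup : goUp n l v)
    (ha : Mv (pad v) (2*n+1) < 0) : (wt (fF n l v) : ℤ) = (wt v : ℤ) + 1 := by
  have h1 := hh_pad_wt' n (fF n l v)
  rw [pad_fF_up n l v hup] at h1
  have h2 := hhN_up (pad v) (2*n+1) ha
  have h3 := hh_pad_wt' n v
  omega

lemma wt_fF_dn (n l : ℕ) (v : Fin (2*n+1) → Bool) (hdn : ¬goUp n l v)
    (hb : Mv (pad v) (2*n+1) < hh (pad v) (2*n+1)) :
    (wt (fF n l v) : ℤ) = (wt v : ℤ) - 1 := by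
  have h1 := hh_pad_wt' n (fF n l v)
  rw [pad_fF_dn n l v hdn] at h1
  have h2 := hhN_dn (pad v) (2*n+1) hb
  have h3 := hh_pad_wt' n v
  omega

lemma Mv_fF_up (n l : ℕ) (v : Fin (2*n+1) → Bool) (hup : goUp n l v)
    (ha : Mv (pad v) (2*n+1) < 0) :
    Mv (pad (fF n l v)) (2*n+1) = Mv (pad v) (2*n+1) + 1 := by
  rw [pad_fF_up n l v hup]
  exact Mv_up (pad v) (2*n+1) ha

lemma Mv_fF_dn (n l : ℕ) (v : Fin (2*n+1) → Bool) (hdn : ¬goUp n l v)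
    (hb : Mv (pad v) (2*n+1) < hh (pad v) (2*n+1)) :
    Mv (pad (fF n l v)) (2*n+1) = Mv (pad v) (2*n+1) - 1 := by
  rw [pad_fF_dn n l v hdn]
  exact Mv_dn (pad v) (2*n+1) hb

lemma Lzv_fF_up (n l : ℕ) (v : Fin (2*n+1) → Bool) (hup : goUp n l v)
    (ha : Mv (pad v) (2*n+1) < 0) : Lzv n l (fF n l v) = Lzv n l v := by
  rw [Lzv, Lzv]
  congr 1
  rw [mvl, mvl, wt_fF_up n l v hup ha, Mv_fF_up n l v hup ha]
  ring

lemma Lzv_fF_dn (n l : ℕ) (v : Fin (2*n+1) → Bool) (hdn : ¬goUp n l v)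
    (hb : Mv (pad v) (2*n+1) < hh (pad v) (2*n+1)) :
    Lzv n l (fF n l v) = Lzv n l v := by
  rw [Lzv, Lzv]
  congr 1
  rw [mvl, mvl, wt_fF_dn n l v hdn hb, Mv_fF_dn n l v hdn hb]
  ring

lemma goUp_fF_up (n l : ℕ) (v : Fin (2*n+1) → Bool) (hup : goUp n l v)
    (ha : Mv (pad v) (2*n+1) < 0) : ¬goUp n l (fF n l v) := by
  rw [goUp]
  have he : (wt (fF n l v) : ℤ) - Lzv n l (fF n l v)
      = ((wt v : ℤ) - Lzv n l v) + 1 := by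
    rw [Lzv_fF_up n l v hup ha, wt_fF_up n l v hup ha]; ring
  rw [he, Int.even_add_one]
  exact not_not_intro hup

lemma goUp_fF_dn (n l : ℕ) (v : Fin (2*n+1) → Bool) (hdn : ¬goUp n l v)
    (hb : Mv (pad v) (2*n+1) < hh (pad v) (2*n+1)) : goUp n l (fF n l v) := by
  rw [goUp]
  have he : ((wt v : ℤ) - Lzv n l v) = ((wt (fF n l v) : ℤ) - Lzv n l (fF n l v)) + 1 := by
    rw [Lzv_fF_dn n l v hdn hb, wt_fF_dn n l v hdn hb]; ring
  rw [goUp, he, Int.even_add_one] at hdn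
  exact not_not.mp hdn

lemma fF_fF_up (n l : ℕ) (v : Fin (2*n+1) → Bool) (hup : goUp n l v)
    (ha : Mv (pad v) (2*n+1) < 0) : fF n l (fF n l v) = v := by
  have hnup := goUp_fF_up n l v hup ha
  funext i
  rw [fF, if_neg hnup, pad_fF_up n l v hup, down_up (pad v) (2*n+1) ha]
  exact pad_lt v i.isLt

lemma fF_fF_dn (n l : ℕ) (v : Fin (2*n+1) → Bool) (hdn : ¬goUp n l v)
    (hb : Mv (pad v) (2*n+1) < hh (pad v) (2*n+1)) : fF n l (fF n l v) = v := by
  have hnup := goUp_fF_dn n l v hdn hb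
  funext i
  rw [fF, if_pos hnup, pad_fF_dn n l v hdn, up_dn (pad v) (2*n+1) hb]
  exact pad_lt v i.isLt

section Main

variable (n l : ℕ)

lemma mem_fF (hl1 : 1 ≤ l) (hl2 : l ≤ n + 1) (v : Fin (2*n+1) → Bool)
    (hv1 : n + 1 - l ≤ wt v) (hv2 : wt v ≤ n + l) :
    n + 1 - l ≤ wt (fF n l v) ∧ wt (fF n l v) ≤ n + l := by
  have hd := defin n l hl1 hl2 v hv1 hv2
  by_cases hup : goUp n l v
  · obtain ⟨ha, hb⟩ := hd.1 hup
    have hw := wt_fF_up n l v hup ha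
    omega
  · obtain ⟨ha, hb⟩ := hd.2 hup
    have hw := wt_fF_dn n l v hup ha
    omega

lemma fF_invol (hl1 : 1 ≤ l) (hl2 : l ≤ n + 1) (v : Fin (2*n+1) → Bool)
    (hv1 : n + 1 - l ≤ wt v) (hv2 : wt v ≤ n + l) : fF n l (fF n l v) = v := by
  have hd := defin n l hl1 hl2 v hv1 hv2
  by_cases hup : goUp n l v
  · exact fF_fF_up n l v hup (hd.1 hup).1
  · exact fF_fF_dn n l v hup (hd.2 hup).1

lemma fF_eq_update_up (v : Fin (2*n+1) → Bool) (hup : goUp n l v)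
    (hp : fm (pad v) (2*n+1) - 1 < 2*n+1) :
    fF n l v = Function.update v ⟨fm (pad v) (2*n+1) - 1, hp⟩ true := by
  funext i
  rw [fF, if_pos hup]
  by_cases h : i = ⟨fm (pad v) (2*n+1) - 1, hp⟩
  · subst h
    rw [Function.update_self, Function.update_self]
  · rw [Function.update_of_ne h, Function.update_of_ne (by simpa [Fin.ext_iff] using h)]
    exact pad_lt v i.isLt

lemma fF_eq_update_dn (v : Fin (2*n+1) → Bool) (hdn : ¬goUp n l v)
    (hp : lm (pad v) (2*n+1) < 2*n+1) :
    fF n l v = Function.update v ⟨lm (pad v) (2*n+1), hp⟩ false := by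
  funext i
  rw [fF, if_neg hdn]
  by_cases h : i = ⟨lm (pad v) (2*n+1), hp⟩
  · subst h
    rw [Function.update_self, Function.update_self]
  · rw [Function.update_of_ne h, Function.update_of_ne (by simpa [Fin.ext_iff] using h)]
    exact pad_lt v i.isLt

lemma dist_fF (hl1 : 1 ≤ l) (hl2 : l ≤ n + 1) (v : Fin (2*n+1) → Bool)
    (hv1 : n + 1 - l ≤ wt v) (hv2 : wt v ≤ n + l) :
    hammingDist v (fF n l v) = 1 := by
  have hd := defin n l hl1 hl2 v hv1 hv2
  by_cases hup : goUp n l v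
  · have ha := (hd.1 hup).1
    have hfm1 := fm_pos (pad v) (2*n+1) ha
    have hfm2 := fm_le (pad v) (2*n+1)
    have hp : fm (pad v) (2*n+1) - 1 < 2*n+1 := by omega
    rw [fF_eq_update_up n l v hup hp]
    apply hammingDist_update
    have := x_fm (pad v) (2*n+1) ha
    rw [pad_lt v hp] at this
    simp [this]
  · have hb := (hd.2 hup).1
    have hp : lm (pad v) (2*n+1) < 2*n+1 := lm_lt (pad v) (2*n+1) hb
    rw [fF_eq_update_dn n l v hup hp]
    apply hammingDist_update
    have := x_lm (pad v) (2*n+1) hb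
    rw [pad_lt v hp] at this
    simp [this]

lemma fF_ne (hl1 : 1 ≤ l) (hl2 : l ≤ n + 1) (v : Fin (2*n+1) → Bool)
    (hv1 : n + 1 - l ≤ wt v) (hv2 : wt v ≤ n + l) : fF n l v ≠ v := by
  intro heq
  have hd := dist_fF n l hl1 hl2 v hv1 hv2
  rw [heq] at hd
  simp [hammingDist_self] at hd

lemma mem_negv (hl1 : 1 ≤ l) (hl2 : l ≤ n + 1) (v : Fin (2*n+1) → Bool)
    (hv1 : n + 1 - l ≤ wt v) (hv2 : wt v ≤ n + l) :
    n + 1 - l ≤ wt (negv v) ∧ wt (negv v) ≤ n + l := by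
  have := wt_negv v
  push_cast at this
  omega

/-- the key edge-disjointness: the matching `fF` and its complement-conjugate
disagree everywhere -/
lemma fF_ne_gF (hn : 1 ≤ n) (hl1 : 1 ≤ l) (hl2 : l ≤ n + 1) (u : Fin (2*n+1) → Bool)
    (hv1 : n + 1 - l ≤ wt u) (hv2 : wt u ≤ n + l) :
    fF n l u ≠ negv (fF n l (negv u)) := by
  intro heq
  have hN2 : 2 ≤ 2*n+1 := by omega
  have hxy : ∀ k ≤ 2*n+1, hh (pad (negv u)) k = -hh (pad u) k := hh_pad_neg u
  obtain ⟨hw1, hw2⟩ := mem_negv n l hl1 hl2 u hv1 hv2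
  have hdx := defin n l hl1 hl2 u hv1 hv2
  have hdy := defin n l hl1 hl2 (negv u) hw1 hw2
  by_cases h1 : goUp n l u <;> by_cases h2 : goUp n l (negv u)
  · -- both up: positions p := fm x - 1, p' := fm y - 1
    have ha := (hdx.1 h1).1
    have hay := (hdy.1 h2).1
    have hp : fm (pad u) (2*n+1) - 1 < 2*n+1 := by
      have := fm_pos (pad u) (2*n+1) ha; have := fm_le (pad u) (2*n+1); omega
    have hval := congrFun heq ⟨fm (pad u) (2*n+1) - 1, hp⟩
    rw [fF, if_pos h1] at hval
    simp only [negv, fF, if_pos h2] at hval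
    rw [Function.update_self] at hval
    by_cases hpp : fm (pad u) (2*n+1) - 1 = fm (pad (negv u)) (2*n+1) - 1
    · rw [← hpp, Function.update_self] at hval
      simp at hval
    · rw [Function.update_of_ne (by omega)] at hval
      rw [pad_negv u hp, x_fm (pad u) (2*n+1) ha] at hval
      simp at hval
  · -- f up, inner down: p := fm x - 1 vs q := lm y
    have ha := (hdx.1 h1).1
    have hby := (hdy.2 h2).1
    have hp : fm (pad u) (2*n+1) - 1 < 2*n+1 := by
      have := fm_pos (pad u) (2*n+1) ha; have := fm_le (pad u) (2*n+1); omega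
    by_cases hpp : fm (pad u) (2*n+1) - 1 = lm (pad (negv u)) (2*n+1)
    · exact coreA (pad u) (pad (negv u)) (2*n+1) hN2 hxy ha hpp
    · have hval := congrFun heq ⟨fm (pad u) (2*n+1) - 1, hp⟩
      rw [fF, if_pos h1] at hval
      simp only [negv, fF, if_neg h2] at hval
      rw [Function.update_self, Function.update_of_ne hpp] at hval
      rw [pad_negv u hp, x_fm (pad u) (2*n+1) ha] at hval
      simp at hval
  · -- f down, inner up: i := lm x vs q' := fm y - 1
    have hbx := (hdx.2 h1).1
    have hay := (hdy.1 h2).1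
    have hp : lm (pad u) (2*n+1) < 2*n+1 := lm_lt (pad u) (2*n+1) hbx
    by_cases hpp : lm (pad u) (2*n+1) = fm (pad (negv u)) (2*n+1) - 1
    · exact coreB (pad u) (pad (negv u)) (2*n+1) hN2 hxy hbx hay hpp
    · have hval := congrFun heq ⟨lm (pad u) (2*n+1), hp⟩
      rw [fF, if_neg h1] at hval
      simp only [negv, fF, if_pos h2] at hval
      rw [Function.update_self, Function.update_of_ne (by omega)] at hval
      rw [pad_negv u hp, x_lm (pad u) (2*n+1) hbx] at hval
      simp at hval
  · -- both down: i := lm x vs q := lm y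
    have hbx := (hdx.2 h1).1
    have hp : lm (pad u) (2*n+1) < 2*n+1 := lm_lt (pad u) (2*n+1) hbx
    have hval := congrFun heq ⟨lm (pad u) (2*n+1), hp⟩
    rw [fF, if_neg h1] at hval
    simp only [negv, fF, if_neg h2] at hval
    rw [Function.update_self] at hval
    by_cases hpp : lm (pad u) (2*n+1) = lm (pad (negv u)) (2*n+1)
    · rw [← hpp, Function.update_self] at hval
      simp at hval
    · rw [Function.update_of_ne hpp] at hval
      rw [pad_negv u hp, x_lm (pad u) (2*n+1) hbx] at hval
      simp at hval

end Main

section Assemble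

variable (n l : ℕ)

lemma memd {v : Fin (2*n+1) → Bool} (h : v ∈ middleSet n l) :
    n + 1 - l ≤ wt v ∧ wt v ≤ n + l := h

def fS (hl1 : 1 ≤ l) (hl2 : l ≤ n + 1) (v : middleSet n l) : middleSet n l :=
  ⟨fF n l v.1, ⟨(mem_fF n l hl1 hl2 v.1 (memd n l v.2).1 (memd n l v.2).2).1,
    (mem_fF n l hl1 hl2 v.1 (memd n l v.2).1 (memd n l v.2).2).2⟩⟩

lemma mem_negv' (hl1 : 1 ≤ l) (hl2 : l ≤ n + 1) (v : middleSet n l) :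
    n + 1 - l ≤ wt (negv v.1) ∧ wt (negv v.1) ≤ n + l :=
  mem_negv n l hl1 hl2 v.1 (memd n l v.2).1 (memd n l v.2).2

def gS (hl1 : 1 ≤ l) (hl2 : l ≤ n + 1) (v : middleSet n l) : middleSet n l :=
  ⟨negv (fF n l (negv v.1)), by
    have hm := mem_negv' n l hl1 hl2 v
    have h2 := mem_fF n l hl1 hl2 (negv v.1) hm.1 hm.2
    exact mem_negv n l hl1 hl2 (fF n l (negv v.1)) h2.1 h2.2⟩

variable (hl1 : 1 ≤ l) (hl2 : l ≤ n + 1)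

lemma fS_invol (v : middleSet n l) : fS n l hl1 hl2 (fS n l hl1 hl2 v) = v :=
  Subtype.ext (fF_invol n l hl1 hl2 v.1 (memd n l v.2).1 (memd n l v.2).2)

lemma gS_invol (v : middleSet n l) : gS n l hl1 hl2 (gS n l hl1 hl2 v) = v := by
  apply Subtype.ext
  show negv (fF n l (negv (negv (fF n l (negv v.1))))) = v.1
  rw [negv_negv]
  have hm := mem_negv' n l hl1 hl2 v
  rw [fF_invol n l hl1 hl2 (negv v.1) hm.1 hm.2, negv_negv]

lemma fS_ne_self (v : middleSet n l) : fS n l hl1 hl2 v ≠ v := by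
  intro h
  exact fF_ne n l hl1 hl2 v.1 (memd n l v.2).1 (memd n l v.2).2 (congrArg Subtype.val h)

lemma gS_ne_self (v : middleSet n l) : gS n l hl1 hl2 v ≠ v := by
  intro h
  have h1 : negv (fF n l (negv v.1)) = v.1 := congrArg Subtype.val h
  have h2 : fF n l (negv v.1) = negv v.1 := by
    have := congrArg negv h1
    rwa [negv_negv] at this
  have hm := mem_negv' n l hl1 hl2 v
  exact fF_ne n l hl1 hl2 (negv v.1) hm.1 hm.2 h2

lemma fS_ne_gS (hn : 1 ≤ n) (v : middleSet n l) :
    fS n l hl1 hl2 v ≠ gS n l hl1 hl2 v := by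
  intro h
  exact fF_ne_gF n l hn hl1 hl2 v.1 (memd n l v.2).1 (memd n l v.2).2
    (congrArg Subtype.val h)

lemma adj_fS (v : middleSet n l) :
    (middleGraph n l).Adj v (fS n l hl1 hl2 v) :=
  dist_fF n l hl1 hl2 v.1 (memd n l v.2).1 (memd n l v.2).2

lemma adj_gS (v : middleSet n l) :
    (middleGraph n l).Adj v (gS n l hl1 hl2 v) := by
  show hammingDist v.1 (negv (fF n l (negv v.1))) = 1
  have h := hammingDist_negv (negv v.1) (fF n l (negv v.1))
  rw [negv_negv] at h
  rw [h]
  have hm := mem_negv' n l hl1 hl2 v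
  exact dist_fF n l hl1 hl2 (negv v.1) hm.1 hm.2

lemma nbr_card {V : Type*} (H : SimpleGraph V) (f g : V → V)
    (hAdj : ∀ a b, H.Adj a b ↔ (b = f a ∨ b = g a)) (v : V) (hne : f v ≠ g v) :
    (H.neighborSet v).ncard = 2 := by
  have hs : H.neighborSet v = {f v, g v} := by
    ext u
    simp [SimpleGraph.mem_neighborSet, hAdj, Set.mem_insert_iff, Set.mem_singleton_iff]
  rw [hs]
  exact Set.ncard_pair hne

end Assemble

end MLCF
end MLCF

/-- For any `n ≥ 1` and `1 ≤ ℓ ≤ n+1`, the subgraph of the `(2n+1)`-cube induced by the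
middle `2ℓ` levels has a cycle factor. -/
theorem middle_levels_cycle_factor (n l : ℕ) (hn : 1 ≤ n) (hl1 : 1 ≤ l) (hl2 : l ≤ n + 1) :
    ∃ H : SimpleGraph (middleSet n l), IsCycleFactor (middleGraph n l) H := by
  refine ⟨{ Adj := fun a b => b = MLCF.fS n l hl1 hl2 a ∨ b = MLCF.gS n l hl1 hl2 a,
            symm := ?_, loopless := ?_ }, ?_, ?_⟩
  · constructor; intro a b h
    rcases h with h | h
    · left; rw [h]; exact (MLCF.fS_invol n l hl1 hl2 a).symm
    · right; rw [h]; exact (MLCF.gS_invol n l hl1 hl2 a).symm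
  · constructor; intro a h
    rcases h with h | h
    · exact MLCF.fS_ne_self n l hl1 hl2 a h.symm
    · exact MLCF.gS_ne_self n l hl1 hl2 a h.symm
  · intro a b h
    rcases h with h | h
    · rw [h]; exact MLCF.adj_fS n l hl1 hl2 a
    · rw [h]; exact MLCF.adj_gS n l hl1 hl2 a
  · intro v
    exact MLCF.nbr_card _ (MLCF.fS n l hl1 hl2) (MLCF.gS n l hl1 hl2)
      (fun a b => Iff.rfl) v (MLCF.fS_ne_gS n l hl1 hl2 hn v)
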